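/- Suppose each insertion into a chunk of size m is independently sampled with probability p = σ/(αm), where σ ≥ 1 and 0 < α ≤ 1 with σ/(αm) ≤ 1. If at most αm/2 elements have been inserted into the chunk, then the probability that the sample counter has reached σ (i.e., at least σ insertions were sampled) is at most exp(−σ/8). -/

import Mathlib

open MeasureTheory

open scoped ENNReal

lemma lintegral_pi_bool_prod {n : ℕ} (μ : Measure Bool) [SigmaFinite μ] (f : Bool → ℝ≥0∞) :
    ∫⁻ x : Fin n → Bool, ∏ i, f (x i) ∂(Measure.pi fun _ => μ) = (∫⁻ b, f b ∂μ) ^ n := by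
  have hf : Measurable f := measurable_of_countable f
  induction n with
  | zero => simp
  | succ n ih =>
    have hF : Measurable fun x : Fin (n+1) → Bool => ∏ i, f (x i) :=
      Finset.measurable_prod _ fun i _ => hf.comp (measurable_pi_apply i)
    rw [← (((measurePreserving_piFinSuccAbove (fun _ : Fin (n+1) => μ) 0).symm
      (MeasurableEquiv.piFinSuccAbove (fun _ => Bool) 0))).lintegral_comp hF]
    have key : ∀ y : Bool × (Fin n → Bool),
        (∏ i : Fin (n+1), f (((MeasurableEquiv.piFinSuccAbove (fun _ => Bool) 0).symm y) i))
          = f y.1 * ∏ i : Fin n, f (y.2 i) := by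
      rintro ⟨a, x⟩
      rw [Fin.prod_univ_succ]
      simp [MeasurableEquiv.piFinSuccAbove_symm_apply, Fin.insertNth_zero]
    simp_rw [key]
    rw [lintegral_prod_mul (f := fun b => f b)
      (g := fun x : Fin n → Bool => ∏ i, f (x i)) hf.aemeasurable
      (Finset.measurable_prod Finset.univ (fun i _ =>
        hf.comp (measurable_pi_apply i))).aemeasurable]
    rw [ih, pow_succ, mul_comm]

/-- Chernoff upper-tail bound for the hash bag sampling counter: with `n`
independent insertions into a chunk of size `m`, each sampled with probability
`p = σ/(αm) ≤ 1`, if `n ≤ αm/2` then the probability that at least `σ`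
insertions were sampled is at most `exp(−σ/8)`. -/
theorem hashbag_premature_resize_prob (σ α : ℝ) (m n : ℕ)
    (hσ : 1 ≤ σ) (hα : 0 < α) (hα1 : α ≤ 1) (hm : 0 < m)
    (p : ENNReal) (hp : p = ENNReal.ofReal (σ / (α * m))) (hp1 : p ≤ 1)
    (hn : (n : ℝ) ≤ α * m / 2) :
    (Measure.pi fun _ : Fin n => (PMF.bernoulli p.toNNReal (by simpa using ENNReal.toNNReal_mono ENNReal.one_ne_top hp1)).toMeasure)
      {ω | σ ≤ ((Finset.univ.filter fun i => ω i = true).card : ℝ)}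
      ≤ ENNReal.ofReal (Real.exp (-σ / 8)) := by
  have hσ0 : 0 < σ := lt_of_lt_of_le one_pos hσ
  have hαm : 0 < α * m := by positivity
  set q : ℝ := σ / (α * m) with hq
  have hq0 : 0 < q := div_pos hσ0 hαm
  have hq1 : q ≤ 1 := by
    rw [hp] at hp1
    exact ENNReal.ofReal_le_one.mp hp1
  set f : Bool → ℝ≥0∞ := fun b => if b then 2 else 1 with hf
  set μ := Measure.pi fun _ : Fin n => (PMF.bernoulli p.toNNReal (by simpa using ENNReal.toNNReal_mono ENNReal.one_ne_top hp1)).toMeasure with hμ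
  set X : (Fin n → Bool) → ℕ := fun ω => (Finset.univ.filter fun i => ω i = true).card with hX
  have hg : ∀ ω : Fin n → Bool, (∏ i, f (ω i)) = 2 ^ (X ω) := by
    intro ω
    rw [← Finset.prod_filter_mul_prod_filter_not Finset.univ (fun i => ω i = true)]
    have h1 : ∏ i ∈ Finset.univ.filter (fun i => ω i = true), f (ω i) = 2 ^ (X ω) := by
      rw [Finset.prod_congr rfl (fun i hi => show f (ω i) = 2 by
        simp only [Finset.mem_filter] at hi; simp [hf, hi.2]), Finset.prod_const]
    have h2 : ∏ i ∈ Finset.univ.filter (fun i => ¬ ω i = true), f (ω i) = 1 := by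
      apply Finset.prod_eq_one
      intro i hi
      simp only [Finset.mem_filter] at hi
      simp [hf, hi.2]
    rw [h1, h2, mul_one]
  set ε : ℝ≥0∞ := ENNReal.ofReal (Real.exp (σ * Real.log 2)) with hε
  have hgmeas : Measurable fun ω : Fin n → Bool => ∏ i, f (ω i) :=
    Finset.measurable_prod Finset.univ fun i _ =>
      (measurable_of_countable f).comp (measurable_pi_apply i)
  have hsub : {ω : Fin n → Bool | σ ≤ (X ω : ℝ)} ⊆ {ω | ε ≤ ∏ i, f (ω i)} := by
    intro ω hω
    simp only [Set.mem_setOf_eq] at hω ⊢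
    rw [hg ω, hε]
    have h2 : ((2 : ℝ≥0∞)) ^ (X ω) = ENNReal.ofReal ((2 : ℝ) ^ (X ω)) := by
      rw [ENNReal.ofReal_pow (by norm_num)]
      norm_num
    rw [h2]
    apply ENNReal.ofReal_le_ofReal
    have : Real.exp (σ * Real.log 2) = (2 : ℝ) ^ σ := by
      rw [Real.rpow_def_of_pos (by norm_num), mul_comm]
    rw [this]
    calc (2 : ℝ) ^ σ ≤ (2 : ℝ) ^ ((X ω : ℝ)) :=
          Real.rpow_le_rpow_of_exponent_le (by norm_num) hω
      _ = (2 : ℝ) ^ (X ω) := by rw [Real.rpow_natCast]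
  have hεne : ε ≠ 0 := by
    simp [hε, Real.exp_pos]
  have hεtop : ε ≠ ⊤ := ENNReal.ofReal_ne_top
  calc μ {ω | σ ≤ ((Finset.univ.filter fun i => ω i = true).card : ℝ)}
      ≤ μ {ω | ε ≤ ∏ i, f (ω i)} := measure_mono hsub
    _ ≤ (∫⁻ ω, ∏ i, f (ω i) ∂μ) / ε :=
        meas_ge_le_lintegral_div hgmeas.aemeasurable hεne hεtop
    _ ≤ ENNReal.ofReal (Real.exp (σ / 2)) / ε := by
        apply ENNReal.div_le_div_right
        rw [hμ, lintegral_pi_bool_prod]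
        have hint : (∫⁻ b, f b ∂(PMF.bernoulli p.toNNReal (by simpa using ENNReal.toNNReal_mono ENNReal.one_ne_top hp1)).toMeasure) = 1 + p := by
          rw [lintegral_fintype]
          have ht : ∀ b : Bool, (PMF.bernoulli p.toNNReal (by simpa using ENNReal.toNNReal_mono ENNReal.one_ne_top hp1)).toMeasure {b} = PMF.bernoulli p.toNNReal (by simpa using ENNReal.toNNReal_mono ENNReal.one_ne_top hp1) b :=
            fun b => PMF.toMeasure_apply_singleton _ b (measurableSet_singleton b)
          simp only [Fintype.sum_bool, ht, PMF.bernoulli_apply]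
          have hptop : p ≠ ⊤ := ne_top_of_le_ne_top ENNReal.one_ne_top hp1
          show f true * ((p.toNNReal : NNReal) : ℝ≥0∞)
            + f false * ((1 - p.toNNReal : NNReal) : ℝ≥0∞) = 1 + p
          simp only [cond_true, cond_false, ENNReal.coe_sub, ENNReal.coe_one,
            ENNReal.coe_toNNReal hptop]
          simp only [hf, Bool.cond_true, Bool.cond_false, if_pos, if_neg]
          rw [two_mul]
          simp only [Bool.false_eq_true, if_false, one_mul]
          rw [add_comm (p + p), ← add_assoc, tsub_add_cancel_of_le hp1, add_comm]
        rw [hint, hp]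
        have h1q : (1 : ℝ≥0∞) + ENNReal.ofReal q = ENNReal.ofReal (1 + q) := by
          rw [ENNReal.ofReal_add (by norm_num) hq0.le, ENNReal.ofReal_one]
        rw [h1q, ← ENNReal.ofReal_pow (by linarith)]
        apply ENNReal.ofReal_le_ofReal
        calc (1 + q) ^ n ≤ (Real.exp q) ^ n := by
              exact pow_le_pow_left₀ (by linarith) (by linarith [Real.add_one_le_exp q]) n
          _ = Real.exp (n * q) := by rw [← Real.exp_nat_mul]
          _ ≤ Real.exp (σ / 2) := by
              apply Real.exp_le_exp.mpr
              have : (n : ℝ) * q ≤ (α * m / 2) * (σ / (α * m)) :=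
                mul_le_mul_of_nonneg_right hn hq0.le
              calc (n : ℝ) * q ≤ (α * m / 2) * (σ / (α * m)) := this
                _ = σ / 2 := by field_simp
    _ ≤ ENNReal.ofReal (Real.exp (-σ / 8)) := by
        have hdiv : ENNReal.ofReal (Real.exp (σ / 2)) / ENNReal.ofReal (Real.exp (σ * Real.log 2))
            = ENNReal.ofReal (Real.exp (σ / 2 - σ * Real.log 2)) := by
          rw [Real.exp_sub, ENNReal.ofReal_div_of_pos (Real.exp_pos _)]
        rw [hε, hdiv]
        apply ENNReal.ofReal_le_ofReal
        apply Real.exp_le_exp.mpr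
        have hlog : (0.6931471803 : ℝ) < Real.log 2 := Real.log_two_gt_d9
        nlinarith [hσ0]
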